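/- Over 𝔽₂, the following three identities hold (commutativity of the state-cube face in case 3.a.i, where circle a is homotopically trivial, b and c are nontrivial, and the merged circle bc is trivial): (Δ² ⊗ id) ∘ Δ⁰ = (id ⊗ Δ⁰) ∘ Δ as maps V → V⊗V⊗V; (m² ⊗ id) ∘ (id ⊗ Δ⁰) = Δ⁰ ∘ m as maps V⊗V → V⊗V; and m⁰ ∘ (m² ⊗ id) = m ∘ (id ⊗ m⁰) as maps V⊗V⊗V → V. -/

import Mathlib

open TensorProduct

noncomputable section

/-- The ground field `𝔽₂`. -/
abbrev F2 : Type := ZMod 2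

/-- The two-dimensional `𝔽₂`-vector space `V` with basis `v₊, v₋`,
realized as pairs of coordinates in this basis. -/
abbrev V : Type := F2 × F2

/-- The basis vector `v₊`. -/
def vp : V := (1, 0)

/-- The basis vector `v₋`. -/
def vm : V := (0, 1)

/-- Helper: the bilinear map associated to a pair of bilinear coordinate forms. -/
def bil (f : V → V → V)
    (ha : ∀ x x' y, f (x + x') y = f x y + f x' y)
    (hs : ∀ (c : F2) x y, f (c • x) y = c • f x y)
    (ha' : ∀ x y y', f x (y + y') = f x y + f x y')
    (hs' : ∀ (c : F2) x y, f x (c • y) = c • f x y) :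
    V ⊗[F2] V →ₗ[F2] V :=
  TensorProduct.lift (LinearMap.mk₂ F2 f ha hs ha' hs')

/-- The multiplication `m` of the Khovanov complex:
`m(v₊⊗v₊)=v₊, m(v₊⊗v₋)=v₋, m(v₋⊗v₊)=v₋, m(v₋⊗v₋)=0`. -/
def mKh : V ⊗[F2] V →ₗ[F2] V :=
  bil (fun x y => (x.1 * y.1, x.1 * y.2 + x.2 * y.1))
    (by intros; apply Prod.ext <;> simp <;> ring)
    (by intros; apply Prod.ext <;> simp [smul_eq_mul] <;> ring)
    (by intros; apply Prod.ext <;> simp <;> ring)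
    (by intros; apply Prod.ext <;> simp [smul_eq_mul] <;> ring)

/-- The map `m⁰`: `m⁰(v₊⊗v₊)=0, m⁰(v₊⊗v₋)=v₋, m⁰(v₋⊗v₊)=v₋, m⁰(v₋⊗v₋)=0`. -/
def m0 : V ⊗[F2] V →ₗ[F2] V :=
  bil (fun x y => (0, x.1 * y.2 + x.2 * y.1))
    (by intros; apply Prod.ext <;> simp <;> ring)
    (by intros; apply Prod.ext <;> simp [smul_eq_mul] <;> ring)
    (by intros; apply Prod.ext <;> simp <;> ring)
    (by intros; apply Prod.ext <;> simp [smul_eq_mul] <;> ring)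

/-- The map `m¹`: `m¹(v₊⊗v₊)=v₊, m¹(v₊⊗v₋)=0, m¹(v₋⊗v₊)=v₋, m¹(v₋⊗v₋)=0`. -/
def m1 : V ⊗[F2] V →ₗ[F2] V :=
  bil (fun x y => (x.1 * y.1, x.2 * y.1))
    (by intros; apply Prod.ext <;> simp <;> ring)
    (by intros; apply Prod.ext <;> simp [smul_eq_mul] <;> ring)
    (by intros; apply Prod.ext <;> simp <;> ring)
    (by intros; apply Prod.ext <;> simp [smul_eq_mul] <;> ring)

/-- The map `m²`: `m²(v₊⊗v₊)=v₊, m²(v₊⊗v₋)=v₋, m²(v₋⊗v₊)=0, m²(v₋⊗v₋)=0`. -/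
def m2 : V ⊗[F2] V →ₗ[F2] V :=
  bil (fun x y => (x.1 * y.1, x.1 * y.2))
    (by intros; apply Prod.ext <;> simp <;> ring)
    (by intros; apply Prod.ext <;> simp [smul_eq_mul] <;> ring)
    (by intros; apply Prod.ext <;> simp <;> ring)
    (by intros; apply Prod.ext <;> simp [smul_eq_mul] <;> ring)

/-- Helper: the linear map `V → V ⊗ V` sending `v₊ ↦ a` and `v₋ ↦ b`. -/
def diag (a b : V ⊗[F2] V) : V →ₗ[F2] V ⊗[F2] V :=
  (LinearMap.fst F2 F2 F2).smulRight a + (LinearMap.snd F2 F2 F2).smulRight b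

/-- The comultiplication `Δ`: `Δ(v₊)=v₊⊗v₋+v₋⊗v₊, Δ(v₋)=v₋⊗v₋`. -/
def ΔKh : V →ₗ[F2] V ⊗[F2] V := diag (vp ⊗ₜ vm + vm ⊗ₜ vp) (vm ⊗ₜ vm)

/-- The map `Δ⁰`: `Δ⁰(v₊)=v₊⊗v₋+v₋⊗v₊, Δ⁰(v₋)=0`. -/
def Δ0 : V →ₗ[F2] V ⊗[F2] V := diag (vp ⊗ₜ vm + vm ⊗ₜ vp) 0

/-- The map `Δ¹`: `Δ¹(v₊)=v₊⊗v₋, Δ¹(v₋)=v₋⊗v₋`. -/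
def Δ1 : V →ₗ[F2] V ⊗[F2] V := diag (vp ⊗ₜ vm) (vm ⊗ₜ vm)

/-- The map `Δ²`: `Δ²(v₊)=v₋⊗v₊, Δ²(v₋)=v₋⊗v₋`. -/
def Δ2 : V →ₗ[F2] V ⊗[F2] V := diag (vm ⊗ₜ vp) (vm ⊗ₜ vm)

/-- The associator `(V ⊗ V) ⊗ V ≃ V ⊗ (V ⊗ V)` as a linear map. -/
noncomputable def α : (V ⊗[F2] V) ⊗[F2] V →ₗ[F2] V ⊗[F2] (V ⊗[F2] V) :=
  (TensorProduct.assoc F2 V V V).toLinearMap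

/-- The inverse associator as a linear map. -/
noncomputable def αinv : V ⊗[F2] (V ⊗[F2] V) →ₗ[F2] (V ⊗[F2] V) ⊗[F2] V :=
  (TensorProduct.assoc F2 V V V).symm.toLinearMap

lemma V_eq (x : V) : x = x.1 • vp + x.2 • vm := by
  apply Prod.ext <;> simp [vp, vm]

lemma lin_ext {W : Type*} [AddCommMonoid W] [Module F2 W] {f g : V →ₗ[F2] W}
    (hp : f vp = g vp) (hm : f vm = g vm) : f = g := by
  refine LinearMap.ext fun x => ?_
  rw [V_eq x, map_add, map_add, map_smul, map_smul, map_smul, map_smul, hp, hm]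

@[simp] lemma diag_apply (a b : V ⊗[F2] V) (x : V) :
    diag a b x = x.1 • a + x.2 • b := by
  simp [diag]

@[simp] lemma mKh_tmul (x y : V) :
    mKh (x ⊗ₜ[F2] y) = (x.1 * y.1, x.1 * y.2 + x.2 * y.1) := rfl

@[simp] lemma m0_tmul (x y : V) :
    m0 (x ⊗ₜ[F2] y) = (0, x.1 * y.2 + x.2 * y.1) := rfl

@[simp] lemma m2_tmul (x y : V) :
    m2 (x ⊗ₜ[F2] y) = (x.1 * y.1, x.1 * y.2) := rfl

@[simp] lemma α_tmul (x y z : V) :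
    α ((x ⊗ₜ[F2] y) ⊗ₜ[F2] z) = x ⊗ₜ[F2] (y ⊗ₜ[F2] z) := rfl

@[simp] lemma αinv_tmul (x y z : V) :
    αinv (x ⊗ₜ[F2] (y ⊗ₜ[F2] z)) = (x ⊗ₜ[F2] y) ⊗ₜ[F2] z := rfl

/-- case 3.a.i face commutativity:
`(Δ² ⊗ id) ∘ Δ⁰ = (id ⊗ Δ⁰) ∘ Δ`, `(m² ⊗ id) ∘ (id ⊗ Δ⁰) = Δ⁰ ∘ m`,
`m⁰ ∘ (m² ⊗ id) = m ∘ (id ⊗ m⁰)`. -/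
theorem face_case_3ai :
    α ∘ₗ Δ2.rTensor V ∘ₗ Δ0 = Δ0.lTensor V ∘ₗ ΔKh ∧
    m2.rTensor V ∘ₗ αinv ∘ₗ Δ0.lTensor V = Δ0 ∘ₗ mKh ∧
    m0 ∘ₗ m2.rTensor V = mKh ∘ₗ m0.lTensor V ∘ₗ α := by
  refine ⟨?_, ?_, ?_⟩
  · apply lin_ext <;>
      simp [Δ0, Δ2, ΔKh, vp, vm, tmul_add, add_tmul]
  · apply TensorProduct.ext
    apply lin_ext <;> (apply lin_ext) <;>
      simp [Δ0, vp, vm, tmul_add, add_tmul, Prod.mk_zero_zero]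
  · apply TensorProduct.ext
    apply TensorProduct.ext
    apply lin_ext <;> (apply lin_ext) <;> (apply lin_ext) <;>
      simp [vp, vm, tmul_add, add_tmul]
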